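/- Define h(k) = (1/336)·[k³ + 21k² + 140k + 294 + 42·(-1)^{k/2} + 48·(k/7)] for even k ≥ 0, where (k/7) is the Legendre symbol mod 7 (with value 0 when 7 | k). Then h(2p) equals the coefficient of t^p in the power series (1+t⁴)/((1-t)²(1-t²)(1-t⁷)) for all p ≥ 0. -/

import Mathlib

open PowerSeries

noncomputable def hfun (p : ℕ) : ℚ :=
  ((2 * p : ℚ) ^ 3 + 21 * (2 * p : ℚ) ^ 2 + 140 * (2 * p : ℚ) + 294 +
      42 * (-1 : ℚ) ^ p + 48 * (jacobiSym (2 * p : ℤ) 7 : ℚ)) / 336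

lemma j11 (a : ℤ) : jacobiSym (2 * (a + 11)) 7 = jacobiSym (2 * (a + 4)) 7 :=
  jacobiSym.mod_left' (by omega)
lemma j10 (a : ℤ) : jacobiSym (2 * (a + 10)) 7 = jacobiSym (2 * (a + 3)) 7 :=
  jacobiSym.mod_left' (by omega)
lemma j8 (a : ℤ) : jacobiSym (2 * (a + 8)) 7 = jacobiSym (2 * (a + 1)) 7 :=
  jacobiSym.mod_left' (by omega)
lemma j7 (a : ℤ) : jacobiSym (2 * (a + 7)) 7 = jacobiSym (2 * a) 7 :=
  jacobiSym.mod_left' (by omega)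

lemma key : (PowerSeries.mk hfun) * ((1 - X) ^ 2 * (1 - X ^ 2) * (1 - X ^ 7) : PowerSeries ℚ)
    = 1 + X ^ 4 := by
  have hD : ((1 - X) ^ 2 * (1 - X ^ 2) * (1 - X ^ 7) : PowerSeries ℚ) =
      1 - X^1 - X^1 + X^3 + X^3 - X^4 - X^7 + X^8 + X^8 - X^10 - X^10 + X^11 := by ring
  rw [hD]
  ext n
  simp only [mul_sub, mul_add, mul_one, map_sub, map_add, coeff_mul_X_pow', coeff_mk,
    coeff_one, coeff_X_pow]
  rcases lt_or_ge n 11 with hn | hn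
  · interval_cases n <;> norm_num [hfun]
  · obtain ⟨m, rfl⟩ : ∃ m, n = m + 11 := ⟨n - 11, by omega⟩
    rw [if_pos (by omega), if_pos (by omega), if_pos (by omega), if_pos (by omega),
      if_pos (by omega), if_pos (by omega), if_pos (by omega), if_neg (by omega),
      if_neg (by omega)]
    have e1 : m + 11 - 1 = m + 10 := by omega
    have e3 : m + 11 - 3 = m + 8 := by omega
    have e4 : m + 11 - 4 = m + 7 := by omega
    have e7 : m + 11 - 7 = m + 4 := by omega
    have e8 : m + 11 - 8 = m + 3 := by omega
    have e10 : m + 11 - 10 = m + 1 := by omega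
    have e11 : m + 11 - 11 = m := by omega
    rw [e1, e3, e4, e7, e8, e10, e11]
    simp only [hfun]
    push_cast
    rw [j11, j10, j8, j7]
    ring

/-- The Hilbert function `h(2p) = (1/336)[(2p)³+21(2p)²+140(2p)+294+42·(-1)^p+48·(2p/7)]`
(Legendre symbol mod 7) equals the coefficient of `t^p` in
`(1+t⁴)/((1-t)²(1-t²)(1-t⁷))`. -/
theorem stmt_13 (V : PowerSeries ℚ)
    (hV : V * ((1 - X) ^ 2 * (1 - X ^ 2) * (1 - X ^ 7)) = 1 + X ^ 4) :
    ∀ p : ℕ,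
      ((2 * p : ℚ) ^ 3 + 21 * (2 * p : ℚ) ^ 2 + 140 * (2 * p : ℚ) + 294 +
          42 * (-1 : ℚ) ^ p + 48 * (jacobiSym (2 * p : ℤ) 7 : ℚ)) / 336 =
        coeff p V := by
  intro p
  have hD0 : ((1 - X) ^ 2 * (1 - X ^ 2) * (1 - X ^ 7) : PowerSeries ℚ) ≠ 0 := by
    intro h
    rw [h, mul_zero] at hV
    have := congrArg (coeff 0) hV
    simp at this
  have hVW : V = PowerSeries.mk hfun := mul_right_cancel₀ hD0 (hV.trans key.symm)
  rw [hVW, coeff_mk]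
  rfl
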